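/- Let θ, θ₁ > 0 and define f(u; θ, θ₁) = (θ₁²θu² + 4θ₁u + 2(θ+1)) / (θu² + 2(θ₁+1)u + θ₁²θ + 2θ₁ + θ). Then the derivative of f(·; θ, θ₁) at u = 1 satisfies f'(1; θ, θ₁) > 1 if and only if θ₁ > 2 and θ > 2/(θ₁−2). -/

import Mathlib

/-- the derivative at `u = 1` of the recursion function `f` exceeds `1`
iff `θ₁ > 2` and `θ > 2/(θ₁ - 2)` (instability of the trivial fixed point). -/
theorem potts_instability_criterion (θ θ₁ : ℝ) (hθ : 0 < θ) (hθ₁ : 0 < θ₁) :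
    deriv (fun u : ℝ =>
        (θ₁ ^ 2 * θ * u ^ 2 + 4 * θ₁ * u + 2 * (θ + 1)) /
          (θ * u ^ 2 + 2 * (θ₁ + 1) * u + θ₁ ^ 2 * θ + 2 * θ₁ + θ)) 1 > 1 ↔
      θ₁ > 2 ∧ θ > 2 / (θ₁ - 2) := by
  have hDpos : 0 < θ * (1:ℝ) ^ 2 + 2 * (θ₁ + 1) * 1 + θ₁ ^ 2 * θ + 2 * θ₁ + θ := by
    positivity
  have hD : (θ * (1:ℝ) ^ 2 + 2 * (θ₁ + 1) * 1 + θ₁ ^ 2 * θ + 2 * θ₁ + θ) ≠ 0 := ne_of_gt hDpos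
  have h1 : HasDerivAt (fun u : ℝ => θ₁ ^ 2 * θ * u ^ 2 + 4 * θ₁ * u + 2 * (θ + 1))
      (θ₁ ^ 2 * θ * (2 * 1) + 4 * θ₁) 1 := by
    have := (((hasDerivAt_pow 2 (1:ℝ)).const_mul (θ₁ ^ 2 * θ)).add
      ((hasDerivAt_id (1:ℝ)).const_mul (4 * θ₁))).add_const (2 * (θ + 1))
    exact this.congr_deriv (by simp)
  have h2 : HasDerivAt (fun u : ℝ => θ * u ^ 2 + 2 * (θ₁ + 1) * u + θ₁ ^ 2 * θ + 2 * θ₁ + θ)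
      (θ * (2 * 1) + 2 * (θ₁ + 1)) 1 := by
    have h := (((((hasDerivAt_pow 2 (1:ℝ)).const_mul θ).add
      ((hasDerivAt_id (1:ℝ)).const_mul (2 * (θ₁ + 1)))).add_const (θ₁ ^ 2 * θ)).add_const
        (2 * θ₁)).add_const θ
    exact h.congr_deriv (by simp)
  have hf : deriv (fun u : ℝ =>
        (θ₁ ^ 2 * θ * u ^ 2 + 4 * θ₁ * u + 2 * (θ + 1)) /
          (θ * u ^ 2 + 2 * (θ₁ + 1) * u + θ₁ ^ 2 * θ + 2 * θ₁ + θ)) 1 = _ := (h1.div h2 hD).deriv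
  rw [hf, gt_iff_lt, lt_div_iff₀ (by positivity)]
  have hθ₁2pos : (0:ℝ) < θ₁ + 2 := by linarith
  constructor
  · intro h
    have hkey : 2 < θ * (θ₁ - 2) := by
      by_contra hc
      push_neg at hc
      nlinarith [mul_nonneg (mul_pos hDpos hθ₁2pos).le (sub_nonneg.2 hc)]
    have hθ₁2 : 2 < θ₁ := by nlinarith
    refine ⟨hθ₁2, ?_⟩
    rw [gt_iff_lt, div_lt_iff₀ (by linarith)]
    linarith
  · rintro ⟨hθ₁2, hθ2⟩
    rw [gt_iff_lt, div_lt_iff₀ (by linarith)] at hθ2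
    have hθ2' : 0 < θ * (θ₁ - 2) - 2 := by linarith
    nlinarith [mul_pos (mul_pos hDpos hθ₁2pos) hθ2']
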